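/- Let F be a cubic form on a two-dimensional vector space V over ℚ (a symmetric trilinear map V×V×V → ℚ). Then there exist a basis of V and rationals f₂, α₁, α₂ such that the components of F in this basis satisfy F₁₁₁ = f₂α₂, F₁₁₂ = −f₂α₁, F₁₂₂ = −α₂, F₂₂₂ = α₁. -/

import Mathlib

/-- Change of basis in dimension 2: given a basis `b` and a matrix with nonzero
determinant, there is a basis whose vectors are the prescribed combinations. -/
lemma aux_basis_change {V : Type*} [AddCommGroup V] [Module ℚ V]
    (b : Module.Basis (Fin 2) ℚ V) (x y z w : ℚ) (h : x * w - y * z ≠ 0) :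
    ∃ e : Module.Basis (Fin 2) ℚ V,
      e 0 = x • b 0 + y • b 1 ∧ e 1 = z • b 0 + w • b 1 := by
  have hdet : IsUnit (Matrix.det !![x, z; y, w]) := by
    simp [Matrix.det_fin_two_of, isUnit_iff_ne_zero]
    intro hc
    apply h
    linarith
  refine ⟨b.map (Matrix.toLinearEquiv b !![x, z; y, w] hdet), ?_, ?_⟩ <;>
  · simp only [Module.Basis.map_apply, Matrix.toLinearEquiv_apply, Matrix.toLin_self]
    simp [Fin.sum_univ_two]

/-- From a basis in which `F₁₁₁ F₂₂₂ = F₁₁₂ F₁₂₂`, produce the desired shape. -/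
lemma aux_extract {V : Type*} [AddCommGroup V] [Module ℚ V]
    (F : V →ₗ[ℚ] V →ₗ[ℚ] V →ₗ[ℚ] ℚ)
    (hsymm₁ : ∀ x y z : V, F x y z = F y x z)
    (hsymm₂ : ∀ x y z : V, F x y z = F x z y)
    (e : Module.Basis (Fin 2) ℚ V)
    (h : F (e 0) (e 0) (e 0) * F (e 1) (e 1) (e 1)
        = F (e 0) (e 0) (e 1) * F (e 0) (e 1) (e 1)) :
    ∃ (e' : Module.Basis (Fin 2) ℚ V) (f₂ α₁ α₂ : ℚ),
      F (e' 0) (e' 0) (e' 0) = f₂ * α₂ ∧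
      F (e' 0) (e' 0) (e' 1) = -f₂ * α₁ ∧
      F (e' 0) (e' 1) (e' 1) = -α₂ ∧
      F (e' 1) (e' 1) (e' 1) = α₁ := by
  set a := F (e 0) (e 0) (e 0) with ha
  set b := F (e 0) (e 0) (e 1) with hb
  set c := F (e 0) (e 1) (e 1) with hc
  set d := F (e 1) (e 1) (e 1) with hd
  by_cases hc0 : c ≠ 0
  · refine ⟨e, -a / c, d, -c, ?_, ?_, ?_, ?_⟩
    · field_simp
      rfl
    · field_simp
      linarith [h]
    · ring_nf
      rfl
    · rfl
  · push_neg at hc0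
    by_cases hd0 : d ≠ 0
    · have ha0 : a = 0 := by
        have : a * d = 0 := by rw [h, hc0]; ring
        rcases mul_eq_zero.mp this with h' | h'
        · exact h'
        · exact absurd h' hd0
      refine ⟨e, -b / d, d, 0, ?_, ?_, ?_, ?_⟩
      · simpa using ha0
      · field_simp
        rfl
      · simpa using hc0
      · rfl
    · push_neg at hd0
      -- c = d = 0 : swap the basis
      refine ⟨e.reindex (Equiv.swap 0 1), 0, a, -b, ?_, ?_, ?_, ?_⟩ <;>
        simp only [Module.Basis.reindex_apply, Equiv.symm_swap, Equiv.swap_apply_left,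
          Equiv.swap_apply_right]
      · rw [← hd, hd0]; ring
      · have : F (e 1) (e 1) (e 0) = c := by
          rw [hc, hsymm₂ (e 1) (e 1) (e 0), hsymm₁ (e 1) (e 0) (e 1)]
        rw [this, hc0]; ring
      · have : F (e 1) (e 0) (e 0) = b := by
          rw [hb, hsymm₁ (e 1) (e 0) (e 0), hsymm₂ (e 0) (e 1) (e 0)]
        rw [this]; ring
      · rfl

theorem stmt_7 (V : Type*) [AddCommGroup V] [Module ℚ V]
    (hV : Module.finrank ℚ V = 2)
    (F : V →ₗ[ℚ] V →ₗ[ℚ] V →ₗ[ℚ] ℚ)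
    (hsymm₁ : ∀ x y z : V, F x y z = F y x z)
    (hsymm₂ : ∀ x y z : V, F x y z = F x z y) :
    ∃ (e : Module.Basis (Fin 2) ℚ V) (f₂ α₁ α₂ : ℚ),
      F (e 0) (e 0) (e 0) = f₂ * α₂ ∧
      F (e 0) (e 0) (e 1) = -f₂ * α₁ ∧
      F (e 0) (e 1) (e 1) = -α₂ ∧
      F (e 1) (e 1) (e 1) = α₁ := by
  have : FiniteDimensional ℚ V := .of_finrank_eq_succ hV
  obtain ⟨b⟩ : Nonempty (Module.Basis (Fin 2) ℚ V) :=
    ⟨Module.finBasisOfFinrankEq ℚ V hV⟩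
  set p := F (b 0) (b 0) (b 0) with h000
  set q := F (b 0) (b 0) (b 1) with h001
  set r := F (b 0) (b 1) (b 1) with h011
  set s := F (b 1) (b 1) (b 1) with h111
  have h010 : F (b 0) (b 1) (b 0) = q := by rw [h001, hsymm₂ (b 0) (b 0) (b 1)]
  have h100 : F (b 1) (b 0) (b 0) = q := by rw [← h010, hsymm₁]
  have h101 : F (b 1) (b 0) (b 1) = r := by rw [h011, hsymm₁]
  have h110 : F (b 1) (b 1) (b 0) = r := by
    rw [← h101, hsymm₂ (b 1) (b 1) (b 0)]
  by_cases hpr : p * r - q ^ 2 ≠ 0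
  · set t := (q * r - p * s) / (2 * (p * r - q ^ 2)) with ht
    obtain ⟨e, he0, he1⟩ := aux_basis_change b 1 0 t 1 (by norm_num)
    refine aux_extract F hsymm₁ hsymm₂ e ?_
    simp only [he0, he1, one_smul, zero_smul, add_zero, zero_add, map_add, map_smul,
      LinearMap.add_apply, LinearMap.smul_apply, smul_eq_mul,
      ← h000, ← h001, ← h011, ← h111, h010, h100, h101, h110]
    rw [← h000, ← h001, ← h011, ← h111] at *
    rw [ht]
    field_simp [ht]
    ring
  · push_neg at hpr
    by_cases hqs : q * s - r ^ 2 ≠ 0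
    · set t := (q * r - p * s) / (2 * (q * s - r ^ 2)) with ht
      obtain ⟨e, he0, he1⟩ := aux_basis_change b 1 t 0 1 (by norm_num)
      refine aux_extract F hsymm₁ hsymm₂ e ?_
      simp only [he0, he1, one_smul, zero_smul, add_zero, zero_add, map_add, map_smul,
        LinearMap.add_apply, LinearMap.smul_apply, smul_eq_mul,
        ← h000, ← h001, ← h011, ← h111, h010, h100, h101, h110]
      rw [← h000, ← h001, ← h011, ← h111] at *
      rw [ht]
      field_simp [ht]
      ring
    · push_neg at hqs
      obtain ⟨e, he0, he1⟩ := aux_basis_change b 1 1 1 (-1) (by norm_num)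
      refine aux_extract F hsymm₁ hsymm₂ e ?_
      simp only [he0, he1, one_smul, neg_smul, map_add, map_neg, map_smul,
        LinearMap.add_apply, LinearMap.neg_apply, LinearMap.smul_apply, smul_eq_mul,
        ← h000, ← h001, ← h011, ← h111, h010, h100, h101, h110]
      rw [← h000, ← h001, ← h011, ← h111] at *
      linear_combination (8:ℚ) * hpr - 8 * hqs
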